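/- arXiv:1504.03129 — 2 statements merged into one kernel-verified Lean document; each statement's English description precedes it below -/
import Mathlib

section
/- Let V ⊂ Z^{|V|} be a semipositive circular subset such that v·v ≤ -2 for each v ∈ V and ∑_{v∈C}(v·v+2) < -1 for each connected component C of V, and let E be a canonical basis adapted to V. Then for each e ∈ E not in the image of the coefficient map there exists u ∈ V such that u·u = -2, u·e = 1, and u is the only element of V with u·e ≠ 0. -/
open Finset

/-- The standard negative definite bilinear form on `ℤ^N`:
`x·y = -∑ i, x i * y i`. -/
def negForm (N : ℕ) (u v : Fin N → ℤ) : ℤ := -∑ i, u i * v i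

/-- A canonical basis of `ℤ^N`: a set of `N` vectors with `e·e = -1` and
distinct elements pairwise orthogonal. -/
def IsCanonicalBasis (N : ℕ) (E : Finset (Fin N → ℤ)) : Prop :=
  E.card = N ∧ (∀ e ∈ E, negForm N e e = -1) ∧
    ∀ e ∈ E, ∀ f ∈ E, e ≠ f → negForm N e f = 0

/-- The equivalence relation on `ℤ^N` generated by `u ~ v` iff
`u, v ∈ V` and `u·v ≠ 0`. -/
def Conn (N : ℕ) (V : Finset (Fin N → ℤ)) : (Fin N → ℤ) → (Fin N → ℤ) → Prop :=
  Relation.EqvGen fun u v => u ∈ V ∧ v ∈ V ∧ negForm N u v ≠ 0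

open scoped Classical in
/-- The connected component of `v` in `V`. -/
noncomputable def compOf (N : ℕ) (V : Finset (Fin N → ℤ)) (v : Fin N → ℤ) :
    Finset (Fin N → ℤ) :=
  V.filter fun u => Conn N V u v

/-- A circular subset of `ℤ^N`. -/
def IsCircular (N : ℕ) (V : Finset (Fin N → ℤ)) : Prop :=
  (∀ v ∈ V, 3 ≤ (compOf N V v).card) ∧
  (∀ u ∈ V, ∀ v ∈ V, u ≠ v →
    negForm N u v = -1 ∨ negForm N u v = 0 ∨ negForm N u v = 1) ∧
  (∀ v ∈ V,
    (V.filter fun u => u ≠ v ∧ (negForm N u v = 1 ∨ negForm N u v = -1)).card = 2)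

/-- `E` is a canonical basis adapted to `V`:  `∑_{v ∈ V} v = -∑_{e ∈ E} e`. -/
def IsAdaptedBasis (N : ℕ) (E V : Finset (Fin N → ℤ)) : Prop :=
  IsCanonicalBasis N E ∧ (∑ v ∈ V, v) = -∑ e ∈ E, e

open scoped Classical in
/-- A semipositive circular subset: each connected component contains exactly one
(unordered) pair of distinct vectors `u, v` with `u·v = -1`. -/
def IsSemipositive (N : ℕ) (V : Finset (Fin N → ℤ)) : Prop :=
  IsCircular N V ∧ ∀ v₀ ∈ V,
    (((compOf N V v₀) ×ˢ (compOf N V v₀)).filter fun p =>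
      p.1 ≠ p.2 ∧ negForm N p.1 p.2 = -1).card = 2

/-- A positive circular subset: `u·v ≥ 0` for all distinct `u, v ∈ V`. -/
def IsPositive (N : ℕ) (V : Finset (Fin N → ℤ)) : Prop :=
  IsCircular N V ∧ ∀ u ∈ V, ∀ v ∈ V, u ≠ v → 0 ≤ negForm N u v

/-- A single blowup of a string of nonnegative integers. -/
inductive IsBlowup : List ℕ → List ℕ → Prop
  | left (a b : ℕ) (m : List ℕ) :
      IsBlowup (a :: (m ++ [b])) (1 :: (a + 1) :: (m ++ [b + 1]))
  | middle (a b : ℕ) (p s : List ℕ) :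
      IsBlowup (p ++ a :: b :: s) (p ++ (a + 1) :: 1 :: (b + 1) :: s)
  | right (a b : ℕ) (m : List ℕ) :
      IsBlowup (a :: (m ++ [b])) ((a + 1) :: (m ++ [b + 1, 1]))

/-- An iterated blowup of `(0,0)`. -/
def IsIteratedBlowup (s : List ℕ) : Prop :=
  Relation.ReflTransGen IsBlowup [0, 0] s

/-- A `(-2)`-expansion of a string of negative integers. -/
inductive IsNeg2Expansion : List ℤ → List ℤ → Prop
  | first (l : List ℤ) (a : ℤ) :
      IsNeg2Expansion (-2 :: (l ++ [a])) (-2 :: -2 :: (l ++ [a - 1]))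
  | second (a : ℤ) (l : List ℤ) :
      IsNeg2Expansion (-2 :: a :: l) (-2 :: (a - 1) :: (l ++ [-2]))

/-- A cyclic listing of (the elements of) a connected component `C` of a circular
subset: a cyclically indexed enumeration of `C` in which consecutive elements
pair to `±1`. -/
def IsCyclicListing (N : ℕ) (C : Finset (Fin N → ℤ)) (m : ℕ)
    (w : ZMod m → (Fin N → ℤ)) : Prop :=
  C.card = m ∧ Function.Injective w ∧ (∀ i, w i ∈ C) ∧ (∀ c ∈ C, ∃ i, w i = c) ∧
    ∀ i : ZMod m, negForm N (w i) (w (i + 1)) = 1 ∨ negForm N (w i) (w (i + 1)) = -1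

/-- The index in the cyclic string at which the `i`-th block starts. -/
def blockStart {t : ℕ} (y : Fin t → ℕ) (i : Fin t) : ℕ := ∑ i' ∈ Finset.Iio i, y i'

/-- The string of squares `(-x₁-2, -2,…,-2, …, -xₜ-2, -2,…,-2)` of the lattice
`Λ_Γ`, as a function on `Fin n` (where `n = ∑ yᵢ`). -/
def sqOf {t : ℕ} (x y : Fin t → ℕ) (n : ℕ) (j : Fin n) : ℤ :=
  -2 - ∑ i : Fin t, if (j : ℕ) = blockStart y i then (x i : ℤ) else 0

/-- The Gram matrix of the lattice `Λ_Γ`: diagonal given by `sq`, consecutive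
vertices pair to `1`, the last and first vertices pair to `(-1)^d`, all other
pairs are orthogonal. -/
def gramOf (n : ℕ) (sq : Fin n → ℤ) (d : ℕ) (i j : Fin n) : ℤ :=
  if i = j then sq i
  else if (j : ℕ) = (i : ℕ) + 1 ∨ (i : ℕ) = (j : ℕ) + 1 then 1
  else if ((i : ℕ) = 0 ∧ (j : ℕ) = n - 1) ∨ ((j : ℕ) = 0 ∧ (i : ℕ) = n - 1)
    then (-1) ^ d
  else 0

open Finset

private lemma negForm_symm (N : ℕ) (u v : Fin N → ℤ) : negForm N u v = negForm N v u := by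
  unfold negForm
  congr 1
  exact Finset.sum_congr rfl fun i _ => mul_comm _ _

private lemma negForm_sum_left (N : ℕ) (S : Finset (Fin N → ℤ)) (z : Fin N → ℤ) :
    negForm N (∑ v ∈ S, v) z = ∑ v ∈ S, negForm N v z := by
  unfold negForm
  have h : ∑ i, (∑ v ∈ S, v) i * z i = ∑ v ∈ S, ∑ i, v i * z i := by
    simp only [Finset.sum_apply, Finset.sum_mul]
    exact Finset.sum_comm
  rw [h, ← Finset.sum_neg_distrib]

private lemma negForm_add_left (N : ℕ) (a b z : Fin N → ℤ) :
    negForm N (a + b) z = negForm N a z + negForm N b z := by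
  unfold negForm
  rw [← neg_add, ← Finset.sum_add_distrib]
  congr 1
  exact Finset.sum_congr rfl fun i _ => by simp [add_mul]

private lemma negForm_neg_left (N : ℕ) (a z : Fin N → ℤ) :
    negForm N (-a) z = -negForm N a z := by
  unfold negForm
  rw [neg_neg, ← Finset.sum_neg_distrib]
  exact Finset.sum_congr rfl fun i _ => by simp

private lemma negForm_single {N : ℕ} (z f : Fin N → ℤ) (j : Fin N)
    (hf : ∀ i, i ≠ j → f i = 0) : negForm N z f = -(z j * f j) := by
  unfold negForm
  congr 1
  exact Finset.sum_eq_single j (fun i _ hij => by rw [hf i hij, mul_zero])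
    (fun h => absurd (Finset.mem_univ j) h)

private lemma negForm_add_add (N : ℕ) (a b : Fin N → ℤ) :
    negForm N (a + b) (a + b) = negForm N a a + 2 * negForm N a b + negForm N b b := by
  unfold negForm
  have h : ∑ i, (a + b) i * (a + b) i
      = ∑ i, (a i * a i + 2 * (a i * b i) + b i * b i) :=
    Finset.sum_congr rfl fun i _ => by simp [Pi.add_apply]; ring
  rw [h, Finset.sum_add_distrib, Finset.sum_add_distrib, ← Finset.mul_sum]
  ring

private lemma exists_delta {N : ℕ} {f : Fin N → ℤ} (h : negForm N f f = -1) :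
    ∃ j, (f j = 1 ∨ f j = -1) ∧ ∀ i, i ≠ j → f i = 0 := by
  have hs : ∑ i, f i * f i = 1 := by
    unfold negForm at h; linarith
  have hex : ∃ j, f j ≠ 0 := by
    by_contra hall
    push_neg at hall
    rw [Finset.sum_eq_zero (fun i _ => by rw [hall i, mul_zero])] at hs
    exact one_ne_zero hs.symm
  obtain ⟨j, hj⟩ := hex
  have hjj : 0 < f j * f j := mul_self_pos.mpr hj
  have hrest : ∀ i ∈ Finset.univ.erase j, 0 ≤ f i * f i := fun i _ => mul_self_nonneg _
  have hsplit : ∑ i ∈ Finset.univ.erase j, f i * f i = (∑ i, f i * f i) - f j * f j :=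
    Finset.sum_erase_eq_sub (Finset.mem_univ j)
  have hsum0 : ∑ i ∈ Finset.univ.erase j, f i * f i = 0 := by
    have h1 := Finset.sum_nonneg hrest
    rw [hsplit, hs] at h1 ⊢
    linarith
  have hz : ∀ i, i ≠ j → f i = 0 := by
    intro i hij
    have := (Finset.sum_eq_zero_iff_of_nonneg hrest).mp hsum0 i
      (Finset.mem_erase.mpr ⟨hij, Finset.mem_univ i⟩)
    exact mul_self_eq_zero.mp this
  have hfj : f j * f j = 1 := by
    rw [hsplit, hs] at hsum0
    linarith
  exact ⟨j, Int.isUnit_iff.mp (IsUnit.of_mul_eq_one _ hfj), hz⟩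

private lemma parseval {N : ℕ} {E : Finset (Fin N → ℤ)} (hE : IsCanonicalBasis N E)
    (v z : Fin N → ℤ) :
    ∑ f ∈ E, negForm N v f * negForm N z f = - negForm N v z := by
  obtain ⟨hcard, hnorm, horth⟩ := hE
  have hdelta : ∀ f : {f // f ∈ E}, ∃ j, ((f : Fin N → ℤ) j = 1 ∨ (f : Fin N → ℤ) j = -1)
      ∧ ∀ i, i ≠ j → (f : Fin N → ℤ) i = 0 := fun f => exists_delta (hnorm f f.2)
  choose J hJ1 hJ2 using hdelta
  have hJne : ∀ f : {f // f ∈ E}, (f : Fin N → ℤ) (J f) ≠ 0 := by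
    intro f
    rcases hJ1 f with h | h <;> rw [h] <;> norm_num
  have hinj : Function.Injective J := by
    intro f g hfg
    by_contra hne
    have hvalne : (f : Fin N → ℤ) ≠ (g : Fin N → ℤ) := fun h => hne (Subtype.ext h)
    have h0 := horth f f.2 g g.2 hvalne
    rw [negForm_single (f : Fin N → ℤ) (g : Fin N → ℤ) (J g) (hJ2 g)] at h0
    have h0' := neg_eq_zero.mp h0
    rw [← hfg] at h0'
    have h2 := hJne g
    rw [← hfg] at h2
    exact (mul_ne_zero (hJne f) h2) h0'
  have hbij : Function.Bijective J := by
    rw [Fintype.bijective_iff_injective_and_card]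
    exact ⟨hinj, by rw [Fintype.card_coe, hcard, Fintype.card_fin]⟩
  have hterm : ∀ f : {f // f ∈ E},
      negForm N v (f : Fin N → ℤ) * negForm N z (f : Fin N → ℤ) = v (J f) * z (J f) := by
    intro f
    rw [negForm_single v (f : Fin N → ℤ) (J f) (hJ2 f),
      negForm_single z (f : Fin N → ℤ) (J f) (hJ2 f)]
    rcases hJ1 f with h | h <;> rw [h] <;> ring
  calc ∑ f ∈ E, negForm N v f * negForm N z f
      = ∑ f : {f // f ∈ E}, negForm N v (f : Fin N → ℤ) * negForm N z (f : Fin N → ℤ) :=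
        (Finset.sum_coe_sort E _).symm
    _ = ∑ j, v j * z j := Fintype.sum_bijective J hbij _ _ hterm
    _ = - negForm N v z := by unfold negForm; rw [neg_neg]

set_option maxHeartbeats 1600000 in
/-- for a semipositive circular subset `V ⊂ ℤ^{|V|}` with squares
`≤ -2` and component sums `< -1`, every `e ∈ E` not in the image of the
coefficient map is hit by a unique element `u ∈ V`, which satisfies `u·u = -2`
and `u·e = 1`. -/
theorem stmt_10 (N : ℕ) (V E : Finset (Fin N → ℤ)) (hN : N = V.card)
    (hsemi : IsSemipositive N V)
    (hsq : ∀ v ∈ V, negForm N v v ≤ -2)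
    (hcomp : ∀ v ∈ V, (∑ u ∈ compOf N V v, (negForm N u u + 2)) < -1)
    (hE : IsAdaptedBasis N E V) :
    ∀ e ∈ E,
      (∀ v ∈ V, negForm N (∑ u ∈ V, u) v = negForm N v v + 2 →
        ¬(negForm N v e = -1 ∨ negForm N v e = 2)) →
      ∃ u ∈ V, negForm N u u = -2 ∧ negForm N u e = 1 ∧
        ∀ w ∈ V, negForm N w e ≠ 0 → w = u := by
  classical
  obtain ⟨⟨hcomp3, hpair, hdeg2⟩, hsemi2⟩ := hsemi
  obtain ⟨⟨hEcard, hEnorm, hEorth⟩, hadapt⟩ := hE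
  intro e he hcoef
  -- Step 1: all coefficients in the column of e are 0 or 1
  have hc01 : ∀ v ∈ V, negForm N v e = 0 ∨ negForm N v e = 1 := by
    intro v hv
    have hpar : ∑ f ∈ E, negForm N v f * negForm N v f = -negForm N v v :=
      parseval ⟨hEcard, hEnorm, hEorth⟩ v v
    have hEsum : (∑ f ∈ E, f) = -∑ u ∈ V, u := by rw [hadapt, neg_neg]
    have hsumf : ∑ f ∈ E, negForm N v f = -∑ u ∈ V, negForm N u v := by
      have h1 : ∑ f ∈ E, negForm N v f = ∑ f ∈ E, negForm N f v :=
        Finset.sum_congr rfl fun f _ => negForm_symm N v f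
      rw [h1, ← negForm_sum_left, hEsum, negForm_neg_left, negForm_sum_left]
    -- the sum of pairings with the rest of V is 0 or 2
    have hnb : ∑ u ∈ V, negForm N u v = negForm N v v ∨
        ∑ u ∈ V, negForm N u v = negForm N v v + 2 := by
      have herase : ∑ u ∈ V.erase v, negForm N u v
          = (∑ u ∈ V, negForm N u v) - negForm N v v :=
        Finset.sum_erase_eq_sub hv
      obtain ⟨a, b, hab, hFeq⟩ := Finset.card_eq_two.mp (hdeg2 v hv)
      have hsub : (V.filter fun u => u ≠ v ∧ (negForm N u v = 1 ∨ negForm N u v = -1))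
          ⊆ V.erase v := by
        intro q hq
        rw [Finset.mem_filter] at hq
        exact Finset.mem_erase.mpr ⟨hq.2.1, hq.1⟩
      have hzero' : ∀ q ∈ V.erase v,
          q ∉ (V.filter fun u => u ≠ v ∧ (negForm N u v = 1 ∨ negForm N u v = -1)) →
          negForm N q v = 0 := by
        intro q hq hnq
        rw [Finset.mem_erase] at hq
        rw [Finset.mem_filter] at hnq
        rcases hpair q hq.2 v hv hq.1 with h | h | h
        · exact absurd ⟨hq.2, hq.1, Or.inr h⟩ hnq
        · exact h
        · exact absurd ⟨hq.2, hq.1, Or.inl h⟩ hnq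
      have hFsum : ∑ u ∈ V.erase v, negForm N u v = negForm N a v + negForm N b v := by
        rw [← Finset.sum_subset hsub hzero', hFeq, Finset.sum_pair hab]
      have haF : a ∈ (V.filter fun u => u ≠ v ∧ (negForm N u v = 1 ∨ negForm N u v = -1)) := by
        rw [hFeq]; exact Finset.mem_insert_self a {b}
      have hbF : b ∈ (V.filter fun u => u ≠ v ∧ (negForm N u v = 1 ∨ negForm N u v = -1)) := by
        rw [hFeq]; exact Finset.mem_insert_of_mem (Finset.mem_singleton_self b)
      rw [Finset.mem_filter] at haF hbF
      obtain ⟨haV, hav, ha1⟩ := haF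
      obtain ⟨hbV, hbv, hb1⟩ := hbF
      have hnotboth : ¬(negForm N a v = -1 ∧ negForm N b v = -1) := by
        rintro ⟨ha2, hb2⟩
        have h2 := hsemi2 v hv
        have hvC : v ∈ compOf N V v := Finset.mem_filter.mpr ⟨hv, Relation.EqvGen.refl v⟩
        have haC : a ∈ compOf N V v := Finset.mem_filter.mpr
          ⟨haV, Relation.EqvGen.rel _ _ ⟨haV, hv, by rw [ha2]; norm_num⟩⟩
        have hbC : b ∈ compOf N V v := Finset.mem_filter.mpr
          ⟨hbV, Relation.EqvGen.rel _ _ ⟨hbV, hv, by rw [hb2]; norm_num⟩⟩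
        have hsub3 : ({(a, v), (v, a), (b, v)} : Finset ((Fin N → ℤ) × (Fin N → ℤ))) ⊆
            ((compOf N V v ×ˢ compOf N V v).filter fun p =>
              p.1 ≠ p.2 ∧ negForm N p.1 p.2 = -1) := by
          intro p hp
          simp only [Finset.mem_insert, Finset.mem_singleton] at hp
          rcases hp with rfl | rfl | rfl
          · exact Finset.mem_filter.mpr ⟨Finset.mem_product.mpr ⟨haC, hvC⟩, hav, ha2⟩
          · exact Finset.mem_filter.mpr ⟨Finset.mem_product.mpr ⟨hvC, haC⟩, Ne.symm hav,
              by rw [negForm_symm]; exact ha2⟩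
          · exact Finset.mem_filter.mpr ⟨Finset.mem_product.mpr ⟨hbC, hvC⟩, hbv, hb2⟩
        have hcard3 : ({(a, v), (v, a), (b, v)} : Finset ((Fin N → ℤ) × (Fin N → ℤ))).card = 3 :=
          Finset.card_eq_three.mpr ⟨(a, v), (v, a), (b, v),
            fun h => hav (congrArg Prod.fst h),
            fun h => hab (congrArg Prod.fst h),
            fun h => hav (congrArg Prod.snd h), rfl⟩
        have hle := Finset.card_le_card hsub3
        rw [hcard3, h2] at hle
        omega
      rcases ha1 with ha1 | ha1 <;> rcases hb1 with hb1 | hb1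
      · right; linarith
      · left; linarith
      · left; linarith
      · exact absurd ⟨ha1, hb1⟩ hnotboth
    have hterm_nonneg : ∀ f ∈ E, 0 ≤ negForm N v f * negForm N v f - negForm N v f := by
      intro f _
      rcases le_or_gt (negForm N v f) 0 with h | h
      · nlinarith
      · have h1 : 1 ≤ negForm N v f := h
        nlinarith
    have hsum_terms : ∑ f ∈ E, (negForm N v f * negForm N v f - negForm N v f)
        = (∑ u ∈ V, negForm N u v) - negForm N v v := by
      rw [Finset.sum_sub_distrib, hpar, hsumf]; ring
    have hle2 : negForm N v e * negForm N v e - negForm N v e ≤ 2 := by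
      have hsingle := Finset.single_le_sum hterm_nonneg he
      rw [hsum_terms] at hsingle
      rcases hnb with h | h <;> rw [h] at hsingle <;> linarith
    by_contra hcon
    push_neg at hcon
    obtain ⟨hc0, hc1⟩ := hcon
    have h0 := hterm_nonneg e he
    have hlow : -1 ≤ negForm N v e := by nlinarith
    have hhigh : negForm N v e ≤ 2 := by nlinarith
    have hcm : negForm N v e = -1 ∨ negForm N v e = 2 := by omega
    have hterm2 : negForm N v e * negForm N v e - negForm N v e = 2 := by
      rcases hcm with h | h <;> rw [h] <;> norm_num
    have hgen : ∑ u ∈ V, negForm N u v = negForm N v v + 2 := by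
      rcases hnb with h | h
      · exfalso
        have hsingle := Finset.single_le_sum hterm_nonneg he
        rw [hsum_terms, h, hterm2] at hsingle
        linarith
      · exact h
    exact (hcoef v hv (by rw [negForm_sum_left]; exact hgen)) hcm
  -- Step 2: the column of e sums to 1
  have hsum1 : ∑ v ∈ V, negForm N v e = 1 := by
    have h1 : ∑ v ∈ V, negForm N v e = negForm N (∑ v ∈ V, v) e :=
      (negForm_sum_left N V e).symm
    rw [h1, hadapt, negForm_neg_left, negForm_sum_left]
    have h2 : ∑ f ∈ E, negForm N f e = -1 := by
      have h3 : ∑ f ∈ E.erase e, negForm N f e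
          = (∑ f ∈ E, negForm N f e) - negForm N e e := Finset.sum_erase_eq_sub he
      have h4 : ∑ f ∈ E.erase e, negForm N f e = 0 :=
        Finset.sum_eq_zero fun f hf =>
          hEorth f (Finset.mem_of_mem_erase hf) e he (Finset.ne_of_mem_erase hf)
      rw [h4, hEnorm e he] at h3
      linarith
    rw [h2]
    norm_num
  -- Step 3: the unique u hitting e
  have hnonneg : ∀ v ∈ V, 0 ≤ negForm N v e := by
    intro v hv
    rcases hc01 v hv with h | h <;> rw [h] <;> norm_num
  have hexu : ∃ u ∈ V, negForm N u e = 1 := by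
    by_contra hno
    push_neg at hno
    have hall : ∀ v ∈ V, negForm N v e = 0 := by
      intro v hv
      rcases hc01 v hv with h | h
      · exact h
      · exact absurd h (hno v hv)
    rw [Finset.sum_eq_zero hall] at hsum1
    exact one_ne_zero hsum1.symm
  obtain ⟨u, hu, hcu⟩ := hexu
  have hrest0 : ∀ v ∈ V.erase u, negForm N v e = 0 := by
    have hsplit : ∑ v ∈ V.erase u, negForm N v e
        = (∑ v ∈ V, negForm N v e) - negForm N u e := Finset.sum_erase_eq_sub hu
    rw [hsum1, hcu] at hsplit
    norm_num at hsplit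
    intro v hv
    exact (Finset.sum_eq_zero_iff_of_nonneg
      (fun q hq => hnonneg q (Finset.mem_of_mem_erase hq))).mp hsplit v hv
  have huniq : ∀ w ∈ V, negForm N w e ≠ 0 → w = u := by
    intro w hw hwne
    by_contra hne
    exact hwne (hrest0 w (Finset.mem_erase.mpr ⟨hne, hw⟩))
  have hc0 : ∀ v ∈ V, v ≠ u → negForm N v e = 0 := fun v hv hne =>
    hrest0 v (Finset.mem_erase.mpr ⟨hne, hv⟩)
  refine ⟨u, hu, ?_, hcu, huniq⟩
  -- Step 4: u·u = -2
  have huule := hsq u hu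
  by_contra hneq
  have hlt : negForm N u u ≤ -3 := by omega
  -- ===== Part 2: derive a contradiction from hlt : u·u ≤ -3 =====
  revert hlt
  intro hlt
  apply hneq
  exfalso
  obtain ⟨j, hej, hez⟩ := exists_delta (hEnorm e he)
  set wm : (Fin N → ℤ) → (Fin N → ℤ) := fun v => if v = u then u + e else v with hwm
  have hwmBe : ∀ v ∈ V, negForm N (wm v) e = 0 := by
    intro v hv
    by_cases h : v = u
    · rw [hwm]; simp only [if_pos h]
      rw [negForm_add_left, hcu, hEnorm e he]
      norm_num
    · rw [hwm]; simp only [if_neg h]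
      exact hc0 v hv h
  have hwmj : ∀ v ∈ V, wm v j = 0 := by
    intro v hv
    have h1 := hwmBe v hv
    rw [negForm_single (wm v) e j hez] at h1
    have h2 : wm v j * e j = 0 := by linarith
    rcases hej with h | h <;> rw [h] at h2 <;> linarith
  -- rational version of wm
  have hN1 : 1 ≤ N := by
    rw [hN]; exact Finset.card_pos.mpr ⟨u, hu⟩
  obtain ⟨x, hx0, v₀, hv₀V, hxv₀⟩ :
      ∃ x : (Fin N → ℤ) → ℚ,
        (∑ v ∈ V, x v • (fun i => ((wm v i : ℤ) : ℚ)) = 0) ∧ ∃ v₀ ∈ V, x v₀ ≠ 0 := by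
    have hrk : Module.finrank ℚ (LinearMap.ker (LinearMap.proj j : (Fin N → ℚ) →ₗ[ℚ] ℚ)) = N - 1 := by
      have h1 := LinearMap.finrank_range_add_finrank_ker
        (LinearMap.proj j : (Fin N → ℚ) →ₗ[ℚ] ℚ)
      have h2 : LinearMap.range (LinearMap.proj j : (Fin N → ℚ) →ₗ[ℚ] ℚ) = ⊤ :=
        LinearMap.range_eq_top.mpr (fun y => ⟨fun _ => y, rfl⟩)
      rw [h2, finrank_top, Module.finrank_self, Module.finrank_fintype_fun_eq_card,
        Fintype.card_fin] at h1
      omega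
    have hmem : ∀ v : {v // v ∈ V}, (fun i => ((wm v.1 i : ℤ) : ℚ)) ∈ LinearMap.ker (LinearMap.proj j : (Fin N → ℚ) →ₗ[ℚ] ℚ) := by
      intro v
      rw [LinearMap.mem_ker]
      show ((wm v.1 j : ℤ) : ℚ) = 0
      rw [hwmj v.1 v.2]
      norm_num
    have hNLI : ¬ LinearIndependent ℚ (fun v : {v // v ∈ V} =>
        (⟨fun i => ((wm v.1 i : ℤ) : ℚ), hmem v⟩ : LinearMap.ker (LinearMap.proj j : (Fin N → ℚ) →ₗ[ℚ] ℚ))) := by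
      intro hLI
      have hle := hLI.fintype_card_le_finrank
      rw [hrk, Fintype.card_coe, ← hN] at hle
      omega
    obtain ⟨g, hg0, i0, hi0⟩ := Fintype.not_linearIndependent_iff.mp hNLI
    have hg0' : ∑ i : {v // v ∈ V}, g i • (fun i' => ((wm i.1 i' : ℤ) : ℚ)) = (0 : Fin N → ℚ) := by
      have h3 := congrArg ((LinearMap.ker (LinearMap.proj j : (Fin N → ℚ) →ₗ[ℚ] ℚ)).subtype) hg0
      rw [map_sum, map_zero] at h3
      simpa using h3
    refine ⟨fun v => if h : v ∈ V then g ⟨v, h⟩ else 0, ?_, i0.1, i0.2, ?_⟩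
    · rw [← Finset.sum_attach V
        (fun v => (if h : v ∈ V then g ⟨v, h⟩ else 0) • (fun i => ((wm v i : ℤ) : ℚ)))]
      rw [← hg0', Finset.univ_eq_attach]
      exact Finset.sum_congr rfl fun a _ => by rw [dif_pos a.2]
    · show (if h : (i0 : Fin N → ℤ) ∈ V then g ⟨i0, h⟩ else 0) ≠ 0
      rw [dif_pos i0.2]
      exact hi0
    -- ===== master equation =====
  have hzero : ∀ i, ∑ v ∈ V, x v * ((wm v i : ℤ) : ℚ) = 0 := by
    intro i
    have h1 := congrFun hx0 i
    simpa [Finset.sum_apply] using h1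
  have hcast : ∀ a b : Fin N → ℤ,
      ((negForm N a b : ℤ) : ℚ) = -∑ i, ((a i : ℤ) : ℚ) * ((b i : ℤ) : ℚ) := by
    intro a b
    unfold negForm
    push_cast
    ring
  have hmaster : ∑ v ∈ V, ∑ q ∈ V, x v * x q * ((negForm N (wm v) (wm q) : ℤ) : ℚ) = 0 := by
    apply Finset.sum_eq_zero
    intro v hv
    calc ∑ q ∈ V, x v * x q * ((negForm N (wm v) (wm q) : ℤ) : ℚ)
        = ∑ q ∈ V, ∑ i, -((x v * ((wm v i : ℤ) : ℚ)) * (x q * ((wm q i : ℤ) : ℚ))) := by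
          apply Finset.sum_congr rfl
          intro q _
          rw [hcast, mul_neg, Finset.mul_sum, ← Finset.sum_neg_distrib]
          exact Finset.sum_congr rfl fun i _ => by ring
      _ = ∑ i, ∑ q ∈ V, -((x v * ((wm v i : ℤ) : ℚ)) * (x q * ((wm q i : ℤ) : ℚ))) :=
          Finset.sum_comm
      _ = 0 := by
          apply Finset.sum_eq_zero
          intro i _
          have h5 : ∑ q ∈ V, -((x v * ((wm v i : ℤ) : ℚ)) * (x q * ((wm q i : ℤ) : ℚ)))
              = -((x v * ((wm v i : ℤ) : ℚ)) * ∑ q ∈ V, x q * ((wm q i : ℤ) : ℚ)) := by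
            rw [Finset.mul_sum, ← Finset.sum_neg_distrib]
          rw [h5, hzero i, mul_zero, neg_zero]
  -- ===== Gram matrix facts =====
  have hGoff : ∀ v ∈ V, ∀ q ∈ V, v ≠ q → negForm N (wm v) (wm q) = negForm N v q := by
    intro v hv q hq hvq
    by_cases h1 : v = u
    · have h2 : q ≠ u := fun h => hvq (h1.trans h.symm)
      rw [hwm]; simp only [if_pos h1, if_neg h2]
      rw [h1, negForm_add_left, negForm_symm N e q, hc0 q hq h2, add_zero]
    · by_cases h2 : q = u
      · rw [hwm]; simp only [if_neg h1, if_pos h2]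
        rw [h2, negForm_symm N v (u + e), negForm_add_left, negForm_symm N e v,
          hc0 v hv h1, add_zero, negForm_symm N u v]
      · rw [hwm]; simp only [if_neg h1, if_neg h2]
  have hGdiag : ∀ v ∈ V, negForm N (wm v) (wm v) ≤ -2 := by
    intro v hv
    by_cases h1 : v = u
    · rw [hwm]; simp only [if_pos h1]
      rw [negForm_add_add, hcu, hEnorm e he]
      linarith
    · rw [hwm]; simp only [if_neg h1]
      exact hsq v hv
  -- ===== degree-2 fact =====
  have hdeg : ∀ v ∈ V, (V.filter fun q => v ≠ q ∧ negForm N v q ≠ 0).card = 2 := by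
    intro v hv
    have h1 := hdeg2 v hv
    have h2 : (V.filter fun q => v ≠ q ∧ negForm N v q ≠ 0)
        = V.filter fun q => q ≠ v ∧ (negForm N q v = 1 ∨ negForm N q v = -1) := by
      apply Finset.filter_congr
      intro q hq
      constructor
      · rintro ⟨hvq, hB⟩
        refine ⟨Ne.symm hvq, ?_⟩
        rcases hpair q hq v hv (Ne.symm hvq) with h | h | h
        · exact Or.inr h
        · exact absurd (by rw [negForm_symm]; exact h) hB
        · exact Or.inl h
      · rintro ⟨hqv, hB⟩
        refine ⟨Ne.symm hqv, ?_⟩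
        rw [negForm_symm]
        rcases hB with h | h <;> rw [h] <;> norm_num
    rw [h2]
    exact h1
  have hpm : ∀ v ∈ V, ∀ q ∈ V, (v ≠ q ∧ negForm N v q ≠ 0) →
      negForm N v q = 1 ∨ negForm N v q = -1 := by
    intro v hv q hq h
    rcases hpair v hv q hq h.1 with h1 | h1 | h1
    · exact Or.inr h1
    · exact absurd h1 h.2
    · exact Or.inl h1
  -- ===== split master into diagonal + off-diagonal =====
  have hsplit1 : ∀ v ∈ V, ∑ q ∈ V, x v * x q * ((negForm N (wm v) (wm q) : ℤ) : ℚ)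
      = x v * x v * ((negForm N (wm v) (wm v) : ℤ) : ℚ)
        + ∑ q ∈ V, (if v ≠ q ∧ negForm N v q ≠ 0 then
            x v * x q * ((negForm N v q : ℤ) : ℚ) else 0) := by
    intro v hv
    have h1 : ∑ q ∈ V.erase v, x v * x q * ((negForm N (wm v) (wm q) : ℤ) : ℚ)
        = (∑ q ∈ V, x v * x q * ((negForm N (wm v) (wm q) : ℤ) : ℚ))
          - x v * x v * ((negForm N (wm v) (wm v) : ℤ) : ℚ) := Finset.sum_erase_eq_sub hv
    have h2 : ∑ q ∈ V.erase v, x v * x q * ((negForm N (wm v) (wm q) : ℤ) : ℚ)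
        = ∑ q ∈ V, (if v ≠ q ∧ negForm N v q ≠ 0 then
            x v * x q * ((negForm N v q : ℤ) : ℚ) else 0) := by
      rw [← Finset.filter_ne' V v, Finset.sum_filter]
      apply Finset.sum_congr rfl
      intro q hq
      by_cases hq1 : q = v
      · rw [if_neg (by simp [hq1]), if_neg (by simp [hq1])]
      · rw [if_pos hq1]
        by_cases hq2 : negForm N v q = 0
        · rw [if_neg (fun hh => hh.2 hq2), hGoff v hv q hq (Ne.symm hq1), hq2]
          norm_num
        · rw [if_pos ⟨Ne.symm hq1, hq2⟩, hGoff v hv q hq (Ne.symm hq1)]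
    linarith [h1, h2]
  have hmaster2 : (∑ v ∈ V, x v * x v * ((negForm N (wm v) (wm v) : ℤ) : ℚ))
      + ∑ v ∈ V, ∑ q ∈ V, (if v ≠ q ∧ negForm N v q ≠ 0 then
          x v * x q * ((negForm N v q : ℤ) : ℚ) else 0) = 0 := by
    exact Finset.sum_add_distrib.symm.trans
      ((Finset.sum_congr rfl fun v hv => (hsplit1 v hv).symm).trans hmaster)
  -- ===== auxiliary degree sums =====
  have haux1 : ∑ v ∈ V, ∑ q ∈ V, (if v ≠ q ∧ negForm N v q ≠ 0 then x v * x v / 2 else 0)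
      = ∑ v ∈ V, x v * x v := by
    apply Finset.sum_congr rfl
    intro v hv
    rw [← Finset.sum_filter, Finset.sum_const, hdeg v hv, nsmul_eq_mul]
    push_cast
    ring
  have haux2 : ∑ v ∈ V, ∑ q ∈ V, (if v ≠ q ∧ negForm N v q ≠ 0 then x q * x q / 2 else 0)
      = ∑ v ∈ V, x v * x v := by
    rw [Finset.sum_comm]
    calc ∑ q ∈ V, ∑ v ∈ V, (if v ≠ q ∧ negForm N v q ≠ 0 then x q * x q / 2 else 0)
        = ∑ q ∈ V, ∑ v ∈ V, (if q ≠ v ∧ negForm N q v ≠ 0 then x q * x q / 2 else 0) := by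
          apply Finset.sum_congr rfl; intro q _
          apply Finset.sum_congr rfl; intro v _
          refine if_congr ⟨fun h => ⟨Ne.symm h.1, fun hh => h.2 (by rw [negForm_symm]; exact hh)⟩,
            fun h => ⟨Ne.symm h.1, fun hh => h.2 (by rw [negForm_symm]; exact hh)⟩⟩ rfl rfl
      _ = ∑ q ∈ V, x q * x q := by
          apply Finset.sum_congr rfl
          intro q hq
          rw [← Finset.sum_filter, Finset.sum_const, hdeg q hq, nsmul_eq_mul]
          push_cast
          ring
  -- ===== nonnegative pieces =====
  have hSnn : ∀ v ∈ V, ∀ q ∈ V, (0:ℚ) ≤ (if v ≠ q ∧ negForm N v q ≠ 0 then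
      (x v * x v / 2 + x q * x q / 2 - |x v| * |x q|) else 0) := by
    intro v _ q _
    by_cases h : v ≠ q ∧ negForm N v q ≠ 0
    · rw [if_pos h]
      nlinarith [sq_nonneg (|x v| - |x q|), abs_mul_abs_self (x v), abs_mul_abs_self (x q)]
    · rw [if_neg h]
  have hTnn : ∀ v ∈ V, ∀ q ∈ V, (0:ℚ) ≤ (if v ≠ q ∧ negForm N v q ≠ 0 then
      (|x v * x q| - x v * x q * ((negForm N v q : ℤ) : ℚ)) else 0) := by
    intro v hv q hq
    by_cases h : v ≠ q ∧ negForm N v q ≠ 0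
    · rw [if_pos h]
      rcases hpm v hv q hq h with h1 | h1 <;> rw [h1] <;> push_cast <;>
        nlinarith [le_abs_self (x v * x q), neg_abs_le (x v * x q)]
    · rw [if_neg h]
  -- ===== total is zero =====
  have hTot : (∑ v ∈ V, (-((negForm N (wm v) (wm v) : ℤ) : ℚ) - 2) * (x v * x v))
      + (∑ v ∈ V, ∑ q ∈ V, (if v ≠ q ∧ negForm N v q ≠ 0 then
          (x v * x v / 2 + x q * x q / 2 - |x v| * |x q|) else 0))
      + (∑ v ∈ V, ∑ q ∈ V, (if v ≠ q ∧ negForm N v q ≠ 0 then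
          (|x v * x q| - x v * x q * ((negForm N v q : ℤ) : ℚ)) else 0)) = 0 := by
    have e1 : ∑ v ∈ V, (-((negForm N (wm v) (wm v) : ℤ) : ℚ) - 2) * (x v * x v)
        = -(∑ v ∈ V, x v * x v * ((negForm N (wm v) (wm v) : ℤ) : ℚ))
          - 2 * ∑ v ∈ V, x v * x v := by
      rw [← Finset.sum_neg_distrib, Finset.mul_sum, ← Finset.sum_sub_distrib]
      exact Finset.sum_congr rfl fun v _ => by ring
    have e2' : ∑ v ∈ V, ∑ q ∈ V, (if v ≠ q ∧ negForm N v q ≠ 0 then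
          (x v * x v / 2 + x q * x q / 2 - |x v| * |x q|) else 0)
        = (∑ v ∈ V, ∑ q ∈ V, (if v ≠ q ∧ negForm N v q ≠ 0 then x v * x v / 2 else 0))
          + (∑ v ∈ V, ∑ q ∈ V, (if v ≠ q ∧ negForm N v q ≠ 0 then x q * x q / 2 else 0))
          - (∑ v ∈ V, ∑ q ∈ V, (if v ≠ q ∧ negForm N v q ≠ 0 then |x v| * |x q| else 0)) := by
      calc ∑ v ∈ V, ∑ q ∈ V, (if v ≠ q ∧ negForm N v q ≠ 0 then
            (x v * x v / 2 + x q * x q / 2 - |x v| * |x q|) else 0)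
          = ∑ v ∈ V, ((∑ q ∈ V, (if v ≠ q ∧ negForm N v q ≠ 0 then x v * x v / 2 else 0))
            + (∑ q ∈ V, (if v ≠ q ∧ negForm N v q ≠ 0 then x q * x q / 2 else 0))
            - (∑ q ∈ V, (if v ≠ q ∧ negForm N v q ≠ 0 then |x v| * |x q| else 0))) := by
            apply Finset.sum_congr rfl
            intro v _
            rw [← Finset.sum_add_distrib, ← Finset.sum_sub_distrib]
            apply Finset.sum_congr rfl
            intro q _
            by_cases h : v ≠ q ∧ negForm N v q ≠ 0 <;> simp [h]
        _ = _ := by rw [Finset.sum_sub_distrib, Finset.sum_add_distrib]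
    have e3' : ∑ v ∈ V, ∑ q ∈ V, (if v ≠ q ∧ negForm N v q ≠ 0 then
          (|x v * x q| - x v * x q * ((negForm N v q : ℤ) : ℚ)) else 0)
        = (∑ v ∈ V, ∑ q ∈ V, (if v ≠ q ∧ negForm N v q ≠ 0 then |x v| * |x q| else 0))
          - (∑ v ∈ V, ∑ q ∈ V, (if v ≠ q ∧ negForm N v q ≠ 0 then
              x v * x q * ((negForm N v q : ℤ) : ℚ) else 0)) := by
      calc ∑ v ∈ V, ∑ q ∈ V, (if v ≠ q ∧ negForm N v q ≠ 0 then
            (|x v * x q| - x v * x q * ((negForm N v q : ℤ) : ℚ)) else 0)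
          = ∑ v ∈ V, ((∑ q ∈ V, (if v ≠ q ∧ negForm N v q ≠ 0 then |x v| * |x q| else 0))
            - (∑ q ∈ V, (if v ≠ q ∧ negForm N v q ≠ 0 then
                x v * x q * ((negForm N v q : ℤ) : ℚ) else 0))) := by
            apply Finset.sum_congr rfl
            intro v _
            rw [← Finset.sum_sub_distrib]
            apply Finset.sum_congr rfl
            intro q _
            by_cases h : v ≠ q ∧ negForm N v q ≠ 0 <;> simp [h, abs_mul]
        _ = _ := by rw [Finset.sum_sub_distrib]
    rw [e1, e2', e3', haux1, haux2]
    linarith [hmaster2]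
  have hRnn : 0 ≤ ∑ v ∈ V, (-((negForm N (wm v) (wm v) : ℤ) : ℚ) - 2) * (x v * x v) := by
    apply Finset.sum_nonneg
    intro v hv
    have h1 := hGdiag v hv
    have h2 : (0:ℚ) ≤ -((negForm N (wm v) (wm v) : ℤ) : ℚ) - 2 := by
      have h3 : ((negForm N (wm v) (wm v) : ℤ) : ℚ) ≤ ((-2 : ℤ) : ℚ) := by exact_mod_cast h1
      push_cast at h3
      linarith
    nlinarith [mul_self_nonneg (x v)]
  have hSnn' : 0 ≤ ∑ v ∈ V, ∑ q ∈ V, (if v ≠ q ∧ negForm N v q ≠ 0 then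
      (x v * x v / 2 + x q * x q / 2 - |x v| * |x q|) else 0) :=
    Finset.sum_nonneg fun v hv => Finset.sum_nonneg fun q hq => hSnn v hv q hq
  have hTnn' : 0 ≤ ∑ v ∈ V, ∑ q ∈ V, (if v ≠ q ∧ negForm N v q ≠ 0 then
      (|x v * x q| - x v * x q * ((negForm N v q : ℤ) : ℚ)) else 0) :=
    Finset.sum_nonneg fun v hv => Finset.sum_nonneg fun q hq => hTnn v hv q hq
  have hS0 : ∑ v ∈ V, ∑ q ∈ V, (if v ≠ q ∧ negForm N v q ≠ 0 then
      (x v * x v / 2 + x q * x q / 2 - |x v| * |x q|) else 0) = 0 := by linarith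
  have hT0 : ∑ v ∈ V, ∑ q ∈ V, (if v ≠ q ∧ negForm N v q ≠ 0 then
      (|x v * x q| - x v * x q * ((negForm N v q : ℤ) : ℚ)) else 0) = 0 := by linarith
  -- ===== termwise equalities =====
  have hSterm : ∀ v ∈ V, ∀ q ∈ V, (v ≠ q ∧ negForm N v q ≠ 0) → |x v| = |x q| := by
    intro v hv q hq h
    have h2 := (Finset.sum_eq_zero_iff_of_nonneg
      (fun v' hv' => Finset.sum_nonneg fun q' hq' => hSnn v' hv' q' hq')).mp hS0 v hv
    have h3 := (Finset.sum_eq_zero_iff_of_nonneg (fun q' hq' => hSnn v hv q' hq')).mp h2 q hq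
    rw [if_pos h] at h3
    have h4 : (|x v| - |x q|) ^ 2 = 0 := by
      nlinarith [abs_mul_abs_self (x v), abs_mul_abs_self (x q)]
    have h5 : |x v| - |x q| = 0 := by
      have := sq_eq_zero_iff.mp h4
      linarith [this]
    linarith [h5]
  have hTterm : ∀ v ∈ V, ∀ q ∈ V, (v ≠ q ∧ negForm N v q ≠ 0) →
      x v * x q * ((negForm N v q : ℤ) : ℚ) = |x v * x q| := by
    intro v hv q hq h
    have h2 := (Finset.sum_eq_zero_iff_of_nonneg
      (fun v' hv' => Finset.sum_nonneg fun q' hq' => hTnn v' hv' q' hq')).mp hT0 v hv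
    have h3 := (Finset.sum_eq_zero_iff_of_nonneg (fun q' hq' => hTnn v hv q' hq')).mp h2 q hq
    rw [if_pos h] at h3
    linarith
    -- ===== component of v₀ =====
  have hConnAbs : ∀ a b : Fin N → ℤ, Conn N V a b → |x a| = |x b| := by
    intro a b h
    have h' : Relation.EqvGen (fun p r => p ∈ V ∧ r ∈ V ∧ negForm N p r ≠ 0) a b := h
    clear h
    induction h' with
    | rel a b hab =>
        by_cases hab' : a = b
        · rw [hab']
        · exact hSterm a hab.1 b hab.2.1 ⟨hab', hab.2.2⟩
    | refl a => rfl
    | symm a b _ ih => exact ih.symm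
    | trans a b c _ _ ih1 ih2 => exact ih1.trans ih2
  have hCmem : ∀ v ∈ compOf N V v₀, v ∈ V ∧ |x v| = |x v₀| ∧ x v ≠ 0 := by
    intro v hv
    simp only [compOf, Finset.mem_filter] at hv
    have ha := hConnAbs v v₀ hv.2
    refine ⟨hv.1, ha, ?_⟩
    intro h0
    rw [h0, abs_zero] at ha
    exact hxv₀ (abs_eq_zero.mp ha.symm)
  have hCclosed : ∀ v ∈ compOf N V v₀, ∀ q ∈ V, (v ≠ q ∧ negForm N v q ≠ 0) →
      q ∈ compOf N V v₀ := by
    intro v hv q hq h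
    simp only [compOf, Finset.mem_filter] at hv ⊢
    refine ⟨hq, Relation.EqvGen.trans _ _ _
      (Relation.EqvGen.rel _ _ ⟨hq, hv.1, ?_⟩) hv.2⟩
    rw [negForm_symm]; exact h.2
  have hv₀C : v₀ ∈ compOf N V v₀ := by
    simp only [compOf, Finset.mem_filter]
    exact ⟨hv₀V, Relation.EqvGen.refl v₀⟩
  -- sign characterization on edges inside the component
  have hsign : ∀ v ∈ compOf N V v₀, ∀ q ∈ V, (v ≠ q ∧ negForm N v q ≠ 0) →
      (negForm N v q = -1 ↔ x v * x q < 0) := by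
    intro v hv q hq h
    have hvV := (hCmem v hv).1
    have hqC := hCclosed v hv q hq h
    have hxv := (hCmem v hv).2.2
    have hxq := (hCmem q hqC).2.2
    have hT := hTterm v hvV q hq h
    have hy : x v * x q ≠ 0 := mul_ne_zero hxv hxq
    have habs := abs_nonneg (x v * x q)
    rcases hpm v hvV q hq h with h1 | h1
    · rw [h1] at hT
      push_cast at hT
      refine iff_of_false (by rw [h1]; norm_num) ?_
      intro hh
      nlinarith
    · rw [h1] at hT
      push_cast at hT
      refine iff_of_true h1 ?_
      have h6 : x v * x q ≤ 0 := by nlinarith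
      exact lt_of_le_of_ne h6 hy
  -- crossing-pair characterization of the (-1)-pairs
  have hD2 := hsemi2 v₀ hv₀V
  have hDchar : ∀ p : (Fin N → ℤ) × (Fin N → ℤ),
      p ∈ ((compOf N V v₀ ×ˢ compOf N V v₀).filter fun p => p.1 ≠ p.2 ∧ negForm N p.1 p.2 = -1)
      ↔ (p.1 ∈ compOf N V v₀ ∧ p.2 ∈ compOf N V v₀
          ∧ (p.1 ≠ p.2 ∧ negForm N p.1 p.2 ≠ 0) ∧ x p.1 * x p.2 < 0) := by
    intro p
    rw [Finset.mem_filter, Finset.mem_product]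
    constructor
    · rintro ⟨⟨h1, h2⟩, h3, h4⟩
      have h5 : negForm N p.1 p.2 ≠ 0 := by rw [h4]; norm_num
      exact ⟨h1, h2, ⟨h3, h5⟩, (hsign p.1 h1 p.2 (hCmem p.2 h2).1 ⟨h3, h5⟩).mp h4⟩
    · rintro ⟨h1, h2, h3, h4⟩
      exact ⟨⟨h1, h2⟩, h3.1, (hsign p.1 h1 p.2 (hCmem p.2 h2).1 h3).mpr h4⟩
  -- the two sign classes
  have hDunion : (((compOf N V v₀).filter fun v => x v < 0) ×ˢ ((compOf N V v₀).filter fun v => 0 < x v)).filter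
        (fun p => p.1 ≠ p.2 ∧ negForm N p.1 p.2 ≠ 0)
      ∪ (((compOf N V v₀).filter fun v => 0 < x v) ×ˢ ((compOf N V v₀).filter fun v => x v < 0)).filter
        (fun p => p.1 ≠ p.2 ∧ negForm N p.1 p.2 ≠ 0)
      = (compOf N V v₀ ×ˢ compOf N V v₀).filter fun p => p.1 ≠ p.2 ∧ negForm N p.1 p.2 = -1 := by
    ext p
    rw [Finset.mem_union, Finset.mem_filter, Finset.mem_filter, Finset.mem_product,
      Finset.mem_product, Finset.mem_filter, Finset.mem_filter, Finset.mem_filter,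
      Finset.mem_filter, hDchar p]
    constructor
    · rintro (⟨⟨⟨h1, h2⟩, h3, h4⟩, h5⟩ | ⟨⟨⟨h1, h2⟩, h3, h4⟩, h5⟩)
      · exact ⟨h1, h3, h5, mul_neg_of_neg_of_pos h2 h4⟩
      · exact ⟨h1, h3, h5, mul_neg_of_pos_of_neg h2 h4⟩
    · rintro ⟨h1, h2, h3, h4⟩
      rcases mul_neg_iff.mp h4 with ⟨ha, hb⟩ | ⟨ha, hb⟩
      · exact Or.inr ⟨⟨⟨h1, ha⟩, h2, hb⟩, h3⟩
      · exact Or.inl ⟨⟨⟨h1, ha⟩, h2, hb⟩, h3⟩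
  have hDdisj : Disjoint
      ((((compOf N V v₀).filter fun v => x v < 0) ×ˢ ((compOf N V v₀).filter fun v => 0 < x v)).filter
        (fun p => p.1 ≠ p.2 ∧ negForm N p.1 p.2 ≠ 0))
      ((((compOf N V v₀).filter fun v => 0 < x v) ×ˢ ((compOf N V v₀).filter fun v => x v < 0)).filter
        (fun p => p.1 ≠ p.2 ∧ negForm N p.1 p.2 ≠ 0)) := by
    rw [Finset.disjoint_left]
    intro p hp1 hp2
    rw [Finset.mem_filter, Finset.mem_product, Finset.mem_filter, Finset.mem_filter] at hp1 hp2
    exact absurd hp2.1.1.2 (not_lt.mpr (le_of_lt hp1.1.1.2))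
  have hDswap : ((((compOf N V v₀).filter fun v => x v < 0) ×ˢ ((compOf N V v₀).filter fun v => 0 < x v)).filter
        (fun p => p.1 ≠ p.2 ∧ negForm N p.1 p.2 ≠ 0)).card
      = ((((compOf N V v₀).filter fun v => 0 < x v) ×ˢ ((compOf N V v₀).filter fun v => x v < 0)).filter
        (fun p => p.1 ≠ p.2 ∧ negForm N p.1 p.2 ≠ 0)).card := by
    apply Finset.card_bij (fun p _ => (p.2, p.1))
    · intro p hp
      rw [Finset.mem_filter, Finset.mem_product] at hp ⊢
      exact ⟨⟨hp.1.2, hp.1.1⟩, Ne.symm hp.2.1, by rw [negForm_symm]; exact hp.2.2⟩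
    · intro p1 hp1 p2 hp2 hh
      rw [Prod.ext_iff] at hh ⊢
      exact ⟨hh.2, hh.1⟩
    · intro p hp
      refine ⟨(p.2, p.1), ?_, rfl⟩
      rw [Finset.mem_filter, Finset.mem_product] at hp ⊢
      exact ⟨⟨hp.1.2, hp.1.1⟩, Ne.symm hp.2.1, by rw [negForm_symm]; exact hp.2.2⟩
  have hD1card : ((((compOf N V v₀).filter fun v => x v < 0) ×ˢ ((compOf N V v₀).filter fun v => 0 < x v)).filter
      (fun p => p.1 ≠ p.2 ∧ negForm N p.1 p.2 ≠ 0)).card = 1 := by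
    have hcards := Finset.card_union_of_disjoint hDdisj
    rw [hDunion, hD2] at hcards
    omega
  -- handshake in the negative class
  have hdegM : ∀ v ∈ ((compOf N V v₀).filter fun v => x v < 0),
      (((compOf N V v₀).filter fun v => x v < 0).filter fun q => v ≠ q ∧ negForm N v q ≠ 0).card
      + (((compOf N V v₀).filter fun v => 0 < x v).filter fun q => v ≠ q ∧ negForm N v q ≠ 0).card
      = 2 := by
    intro v hv
    rw [Finset.mem_filter] at hv
    have hvC := hv.1
    have hvV := (hCmem v hvC).1
    have hsplitM : (((compOf N V v₀).filter fun v => x v < 0).filter fun q => v ≠ q ∧ negForm N v q ≠ 0)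
        ∪ (((compOf N V v₀).filter fun v => 0 < x v).filter fun q => v ≠ q ∧ negForm N v q ≠ 0)
        = V.filter fun q => v ≠ q ∧ negForm N v q ≠ 0 := by
      ext q
      rw [Finset.mem_union, Finset.mem_filter, Finset.mem_filter, Finset.mem_filter,
        Finset.mem_filter, Finset.mem_filter]
      constructor
      · rintro (⟨⟨hqC, _⟩, hAdj⟩ | ⟨⟨hqC, _⟩, hAdj⟩) <;> exact ⟨(hCmem q hqC).1, hAdj⟩
      · rintro ⟨hqV, hAdj⟩
        have hqC := hCclosed v hvC q hqV hAdj
        have hxq := (hCmem q hqC).2.2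
        rcases lt_or_gt_of_ne hxq with hh | hh
        · exact Or.inl ⟨⟨hqC, hh⟩, hAdj⟩
        · exact Or.inr ⟨⟨hqC, hh⟩, hAdj⟩
    have hdisj : Disjoint
        (((compOf N V v₀).filter fun v => x v < 0).filter fun q => v ≠ q ∧ negForm N v q ≠ 0)
        (((compOf N V v₀).filter fun v => 0 < x v).filter fun q => v ≠ q ∧ negForm N v q ≠ 0) := by
      rw [Finset.disjoint_left]
      intro q hq1 hq2
      rw [Finset.mem_filter, Finset.mem_filter] at hq1 hq2
      exact absurd hq2.1.2 (not_lt.mpr (le_of_lt hq1.1.2))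
    rw [← Finset.card_union_of_disjoint hdisj, hsplitM]
    exact hdeg v hvV
  have hcfp : ∀ (s t : Finset (Fin N → ℤ)),
      ((s ×ˢ t).filter fun p => p.1 ≠ p.2 ∧ negForm N p.1 p.2 ≠ 0).card
      = ∑ a ∈ s, (t.filter fun b => a ≠ b ∧ negForm N a b ≠ 0).card := by
    intro s t
    rw [Finset.card_filter, Finset.sum_product]
    exact Finset.sum_congr rfl fun a _ => by rw [Finset.card_filter]
  have hkey : ((((compOf N V v₀).filter fun v => x v < 0) ×ˢ ((compOf N V v₀).filter fun v => x v < 0)).filter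
      (fun p => p.1 ≠ p.2 ∧ negForm N p.1 p.2 ≠ 0)).card + 1
      = 2 * ((compOf N V v₀).filter fun v => x v < 0).card := by
    rw [hcfp, ← hD1card, hcfp]
    rw [← Finset.sum_add_distrib]
    calc ∑ v ∈ ((compOf N V v₀).filter fun v => x v < 0),
          ((((compOf N V v₀).filter fun v => x v < 0).filter fun q => v ≠ q ∧ negForm N v q ≠ 0).card
          + (((compOf N V v₀).filter fun v => 0 < x v).filter fun q => v ≠ q ∧ negForm N v q ≠ 0).card)
        = ∑ _v ∈ ((compOf N V v₀).filter fun v => x v < 0), 2 :=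
          Finset.sum_congr rfl hdegM
      _ = 2 * ((compOf N V v₀).filter fun v => x v < 0).card := by
          rw [Finset.sum_const, smul_eq_mul, mul_comm]
  have heven : 2 ∣ ((((compOf N V v₀).filter fun v => x v < 0) ×ˢ ((compOf N V v₀).filter fun v => x v < 0)).filter
      (fun p => p.1 ≠ p.2 ∧ negForm N p.1 p.2 ≠ 0)).card := by
    rw [← ZMod.natCast_eq_zero_iff]
    rw [Finset.card_eq_sum_ones, Nat.cast_sum]
    apply Finset.sum_involution (g := fun p _ => (p.2, p.1))
    · intro a _
      decide
    · intro a ha hne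
      rw [Finset.mem_filter] at ha
      intro heq
      exact ha.2.1 ((congrArg Prod.fst heq).symm)
    · intro a ha
      rw [Finset.mem_filter, Finset.mem_product] at ha ⊢
      exact ⟨⟨ha.1.2, ha.1.1⟩, Ne.symm ha.2.1, by rw [negForm_symm]; exact ha.2.2⟩
    · intro a ha
      rfl
  omega
end

section
/- If (s_1,…,s_n) ∈ N_0^n is obtained from (0,0) by a sequence of at least one blowup, then at least two entries of (s_1,…,s_n) are equal to 1. -/
open Finset

/-- `l` has a `1` at some position other than `i` and `i+1`, for every `i`. -/
def MidOne (l : List ℕ) : Prop :=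
  ∀ i : ℕ, ∃ j : ℕ, j ≠ i ∧ j ≠ i + 1 ∧ l[j]? = some 1

def Good (l : List ℕ) : Prop :=
  (∀ x ∈ l, 1 ≤ x) ∧ MidOne l ∧ ∃ j : ℕ, j ≠ 0 ∧ j ≠ l.length - 1 ∧ l[j]? = some 1

lemma two_le_count {l : List ℕ} {j₁ j₂ : ℕ} (hne : j₁ ≠ j₂)
    (h₁ : l[j₁]? = some 1) (h₂ : l[j₂]? = some 1) : 2 ≤ l.count 1 := by
  rw [← List.duplicate_iff_two_le_count, List.duplicate_iff_exists_distinct_get]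
  obtain ⟨hl₁, he₁⟩ := List.getElem?_eq_some_iff.mp h₁
  obtain ⟨hl₂, he₂⟩ := List.getElem?_eq_some_iff.mp h₂
  rcases hne.lt_or_gt with hlt | hlt
  · exact ⟨⟨j₁, hl₁⟩, ⟨j₂, hl₂⟩, hlt, by simp [he₁], by simp [he₂]⟩
  · exact ⟨⟨j₂, hl₂⟩, ⟨j₁, hl₁⟩, hlt, by simp [he₂], by simp [he₁]⟩

lemma good111 : Good [1, 1, 1] := by
  refine ⟨by decide, fun i => ?_, ⟨1, by omega, by simp, rfl⟩⟩
  by_cases hi : i = 0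
  · exact ⟨2, by omega, by omega, rfl⟩
  · exact ⟨0, by omega, by omega, rfl⟩

lemma blowup00 {s z : List ℕ} (h : IsBlowup s z) (hs : s = [0, 0]) :
    z = [1, 1, 1] := by
  cases h with
  | left a b m =>
    have hl := congrArg List.length hs
    simp at hl
    subst hl
    simp at hs
    obtain ⟨rfl, rfl⟩ := hs
    rfl
  | middle a b p s₀ =>
    have hl := congrArg List.length hs
    simp at hl
    obtain rfl : p = [] := List.length_eq_zero_iff.mp (by omega)
    obtain rfl : s₀ = [] := List.length_eq_zero_iff.mp (by omega)
    simp at hs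
    obtain ⟨rfl, rfl⟩ := hs
    rfl
  | right a b m =>
    have hl := congrArg List.length hs
    simp at hl
    subst hl
    simp at hs
    obtain ⟨rfl, rfl⟩ := hs
    rfl


lemma good_step {s z : List ℕ} (hg : Good s) (h : IsBlowup s z) : Good z := by
  obtain ⟨hE, hM, hEnd⟩ := hg
  cases h with
  | middle a b p s₀ =>
    set k := p.length with hk
    have hz1 : ∀ j < k, (p ++ (a+1) :: 1 :: (b+1) :: s₀)[j]? = (p ++ a :: b :: s₀)[j]? := by
      intro j hj
      simp [List.getElem?_append, show j < p.length from hj]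
    have hz2 : (p ++ (a+1) :: 1 :: (b+1) :: s₀)[k+1]? = some 1 := by
      rw [List.getElem?_append_right (by omega)]
      have h1 : k + 1 - p.length = 1 := by omega
      rw [h1]
      rfl
    have hz3 : ∀ j, k + 2 ≤ j →
        (p ++ (a+1) :: 1 :: (b+1) :: s₀)[j+1]? = (p ++ a :: b :: s₀)[j]? := by
      intro j hj
      rw [List.getElem?_append_right (show p.length ≤ j + 1 by omega),
        List.getElem?_append_right (show p.length ≤ j by omega)]
      obtain ⟨d, hd⟩ : ∃ d, j - p.length = d + 2 := ⟨j - p.length - 2, by omega⟩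
      have h1 : j + 1 - p.length = d + 3 := by omega
      rw [h1, hd]
      simp
    have hlen : (p ++ (a+1) :: 1 :: (b+1) :: s₀).length = k + 3 + s₀.length := by
      simp only [List.length_append, List.length_cons]
      omega
    refine ⟨?_, ?_, ⟨k+1, by omega, by omega, hz2⟩⟩
    · intro x hx
      simp only [List.mem_append, List.mem_cons] at hx
      rcases hx with h | rfl | rfl | rfl | h
      · exact hE x (by simp [h])
      · omega
      · omega
      · omega
      · exact hE x (by simp [h])
    · intro i
      obtain ⟨j', hj1, hj2, hj3⟩ := hM k
      by_cases hc : k + 1 ≠ i ∧ k + 1 ≠ i + 1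
      · exact ⟨k+1, hc.1, hc.2, hz2⟩
      · have hi : i = k ∨ i = k + 1 := by omega
        rcases (show j' < k ∨ k + 2 ≤ j' from by omega) with h' | h'
        · exact ⟨j', by omega, by omega, by rw [hz1 j' h']; exact hj3⟩
        · exact ⟨j' + 1, by omega, by omega, by rw [hz3 j' h']; exact hj3⟩
  | left a b m =>
    obtain ⟨j', hj0, hjl, hj3⟩ := hEnd
    have hjlt : j' < (a :: (m ++ [b])).length := (List.getElem?_eq_some_iff.mp hj3).1
    have hsl : (a :: (m ++ [b])).length = m.length + 2 := by simp
    obtain ⟨d, rfl⟩ : ∃ d, j' = d + 1 := ⟨j' - 1, by omega⟩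
    have hdlt : d < m.length := by omega
    have hm1 : m[d]? = some 1 := by
      have h3 := hj3
      simp only [List.getElem?_cons_succ, List.getElem?_append] at h3
      rwa [if_pos hdlt] at h3
    have hz : (1 :: (a+1) :: (m ++ [b+1]))[d+2]? = some 1 := by
      simp only [List.getElem?_cons_succ, List.getElem?_append]
      rwa [if_pos hdlt]
    have hz0 : (1 :: (a+1) :: (m ++ [b+1]))[0]? = some 1 := rfl
    have hzl : (1 :: (a+1) :: (m ++ [b+1])).length = m.length + 3 := by simp
    refine ⟨?_, ?_, ⟨d+2, by omega, by omega, hz⟩⟩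
    · intro x hx
      simp only [List.mem_cons, List.mem_append] at hx
      rcases hx with rfl | rfl | h | rfl | h
      · omega
      · omega
      · exact hE x (by simp [h])
      · omega
      · simp at h
    · intro i
      by_cases hi : i = 0
      · exact ⟨d+2, by omega, by omega, hz⟩
      · exact ⟨0, by omega, by omega, hz0⟩
  | right a b m =>
    obtain ⟨j', hj0, hjl, hj3⟩ := hEnd
    have hjlt : j' < (a :: (m ++ [b])).length := (List.getElem?_eq_some_iff.mp hj3).1
    have hsl : (a :: (m ++ [b])).length = m.length + 2 := by simp
    obtain ⟨d, rfl⟩ : ∃ d, j' = d + 1 := ⟨j' - 1, by omega⟩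
    have hdlt : d < m.length := by omega
    have hm1 : m[d]? = some 1 := by
      have h3 := hj3
      simp only [List.getElem?_cons_succ, List.getElem?_append] at h3
      rwa [if_pos hdlt] at h3
    have hz : ((a+1) :: (m ++ [b+1, 1]))[d+1]? = some 1 := by
      simp only [List.getElem?_cons_succ, List.getElem?_append]
      rwa [if_pos hdlt]
    have hK : ((a+1) :: (m ++ [b+1, 1]))[m.length + 2]? = some 1 := by
      simp only [List.getElem?_cons_succ, List.getElem?_append]
      rw [if_neg (by omega)]
      have h1 : m.length + 1 - m.length = 1 := by omega
      rw [h1]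
      rfl
    have hzl : ((a+1) :: (m ++ [b+1, 1])).length = m.length + 3 := by simp
    refine ⟨?_, ?_, ⟨d+1, by omega, by omega, hz⟩⟩
    · intro x hx
      simp only [List.mem_cons, List.mem_append] at hx
      rcases hx with rfl | h | rfl | rfl | h
      · omega
      · exact hE x (by simp [h])
      · omega
      · omega
      · simp at h
    · intro i
      by_cases hc : m.length + 2 ≠ i ∧ m.length + 2 ≠ i + 1
      · exact ⟨m.length + 2, hc.1, hc.2, hK⟩
      · exact ⟨d+1, by omega, by omega, hz⟩

/-- a string obtained from `(0,0)` by at least one blowup has at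
least two entries equal to `1`. -/
theorem stmt_18 (s z : List ℕ) (hs : IsIteratedBlowup s) (h : IsBlowup s z) :
    2 ≤ z.count 1 := by
  have key : ∀ s, IsIteratedBlowup s → s = [0, 0] ∨ Good s := by
    intro s hs
    induction hs with
    | refl => exact Or.inl rfl
    | tail h1 h2 ih =>
      right
      rcases ih with rfl | hg
      · rw [blowup00 h2 rfl]; exact good111
      · exact good_step hg h2
  rcases key s hs with rfl | hg
  · rw [blowup00 h rfl]; decide
  · obtain ⟨_, hM, j₀, _, _, hj₀⟩ := good_step hg h
    obtain ⟨j, hne, _, hj⟩ := hM j₀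
    exact two_le_count hne hj hj₀
end
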